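/- arXiv:2006.14097 — 2 statements merged into one kernel-verified Lean document; each statement's English description precedes it below -/
import Mathlib

section
/- Fisher–Jerome-type theorem on the torus (Lemma 4.2 of the paper). Let d ≥ 1 and let F ⊂ ℤᵈ be a finite symmetric set (F = −F). Let N ⊂ C(𝕋ᵈ, ℝ) be the (finite-dimensional) real span of the trigonometric functions x ↦ cos⟨k, x⟩ and x ↦ sin⟨k, x⟩ for k ∈ F, with N₀ = dim N, and let W = { w ∈ C(𝕋ᵈ, ℝ)' : w(φ) = 0 for every φ ∈ N }. Let M ≥ N₀ and let (f₁, q₁), …, (f_M, q_M) be linearly independent pairs with each f_m ∈ C(𝕋ᵈ, ℝ) satisfying ∫ f_m(x) cos⟨k,x⟩ dx = ∫ f_m(x) sin⟨k,x⟩ dx = 0 for all k ∈ F, and each q_m ∈ N; assume that the only p ∈ N with ⟨q_m, p⟩ = 0 for all m = 1, …, M is p = 0, where ⟨·,·⟩ is the normalized L² inner product ⟨g, h⟩ = (2π)^{-d} ∫_{𝕋ᵈ} g h. Let z₀ ∈ ℝ^M be feasible, i.e. there exists (w, p) ∈ W × N with w(f_m) + ⟨q_m, p⟩ = (z₀)_m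 for all m. Then the set of minimizers of ‖w‖ over { (w, p) ∈ W × N : w(f_m) + ⟨q_m, p⟩ = (z₀)_m for all m = 1, …, M } is nonempty, convex, and compact for the product of the weak* topology on C(𝕋ᵈ, ℝ)' with the (unique) topology of N; moreover every extreme point (w_ext, p_ext) of this set satisfies w_ext = Σ_{k=1}^{K} a_k δ_{x_k} for some K ≤ M, real weights a₁, …, a_K, and distinct points x₁, …, x_K ∈ 𝕋ᵈ. -/
open scoped Real
open Filter NormedSpace MeasureTheory

instance : Fact ((0 : ℝ) < 2 * π) := ⟨by positivity⟩

/-- The `d`-dimensional torus `(ℝ/2πℤ)ᵈ`. -/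
abbrev Torus (d : ℕ) := Fin d → AddCircle (2 * π)

/-- The continuous function `x ↦ cos⟨k, x⟩` on the torus. -/
noncomputable def trigCos {d : ℕ} (k : Fin d → ℤ) : C(Torus d, ℝ) :=
  ⟨fun x => (∏ i, fourier (k i) (x i)).re,
    Complex.continuous_re.comp (continuous_finset_prod _ fun i _ =>
      (fourier (k i)).continuous.comp (continuous_apply i))⟩

/-- The continuous function `x ↦ sin⟨k, x⟩` on the torus. -/
noncomputable def trigSin {d : ℕ} (k : Fin d → ℤ) : C(Torus d, ℝ) :=
  ⟨fun x => (∏ i, fourier (k i) (x i)).im,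
    Complex.continuous_im.comp (continuous_finset_prod _ fun i _ =>
      (fourier (k i)).continuous.comp (continuous_apply i))⟩

/-- The Dirac evaluation functional `δ_x : φ ↦ φ(x)` as an element of the dual of
`C(𝕋ᵈ, ℝ)`. -/
noncomputable def dirac {d : ℕ} (x : Torus d) : StrongDual ℝ C(Torus d, ℝ) :=
  ContinuousMap.evalCLM ℝ x

/-- The normalized `L²` inner product `⟨g, h⟩ = (2π)^{-d} ∫ g h` on `C(𝕋ᵈ, ℝ)`. -/
noncomputable def nip {d : ℕ} (g h : C(Torus d, ℝ)) : ℝ :=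
  ((2 * π) ^ d)⁻¹ * ∫ x : Torus d, g x * h x


section FJAux
variable {X : Type*} [MetricSpace X] [CompactSpace X]
set_option linter.unusedSectionVars false

noncomputable def fjBump (y : X) (r : ℝ) : C(X, ℝ) :=
  ⟨fun z => min 1 (max 0 (2 - 2 * dist z y / r)), by
    refine continuous_const.min (continuous_const.max ?_)
    exact continuous_const.sub (((continuous_const.mul
      ((continuous_id.dist continuous_const)))).div_const r)⟩

lemma fjBump_apply (y : X) (r : ℝ) (z : X) :
    fjBump y r z = min 1 (max 0 (2 - 2 * dist z y / r)) := rfl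

lemma fjBump_nonneg (y : X) (r : ℝ) (z : X) : 0 ≤ fjBump y r z := by
  rw [fjBump_apply]
  exact le_min one_pos.le (le_max_left _ _)

lemma fjBump_le_one (y : X) (r : ℝ) (z : X) : fjBump y r z ≤ 1 := min_le_left _ _

lemma fjBump_eq_one {y : X} {r : ℝ} (hr : 0 < r) {z : X} (h : dist z y ≤ r / 2) :
    fjBump y r z = 1 := by
  rw [fjBump_apply]
  have h2 : (1 : ℝ) ≤ 2 - 2 * dist z y / r := by
    have : 2 * dist z y / r ≤ 1 := by rw [div_le_one hr]; linarith
    linarith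
  rw [max_eq_right (by linarith), min_eq_left h2]

lemma fjBump_eq_zero {y : X} {r : ℝ} (hr : 0 < r) {z : X} (h : r ≤ dist z y) :
    fjBump y r z = 0 := by
  rw [fjBump_apply]
  have h2 : 2 - 2 * dist z y / r ≤ 0 := by
    rw [sub_nonpos, le_div_iff₀ hr]
    linarith
  rw [max_eq_left h2]
  exact min_eq_right zero_le_one

lemma fjBump_ne_zero_lt {y : X} {r : ℝ} (hr : 0 < r) {z : X} (h : fjBump y r z ≠ 0) :
    dist z y < r := by
  by_contra hc
  exact h (fjBump_eq_zero hr (not_lt.mp hc))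

lemma fj_prod_one_sub {A : Type*} [CommRing A] (θ : ℕ → A) (n : ℕ) :
    ∏ i ∈ Finset.range n, (1 - θ i)
      = 1 - ∑ j ∈ Finset.range n, θ j * ∏ i ∈ Finset.range j, (1 - θ i) := by
  induction n with
  | zero => simp
  | succ n ih => rw [Finset.prod_range_succ, Finset.sum_range_succ, ih]; ring

set_option maxHeartbeats 1000000 in
lemma fj_dual_vanish (w : StrongDual ℝ C(X, ℝ)) {K : ℕ} (x : Fin K → X)
    (hnull : ∀ y : X, (∀ k, y ≠ x k) → ∃ r, 0 < r ∧ ∀ g : C(X, ℝ),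
        (∀ z, r ≤ dist z y → g z = 0) → w g = 0)
    (h : C(X, ℝ)) (hh : ∀ k, h (x k) = 0) : w h = 0 := by
  have main : ∀ ε : ℝ, 0 < ε → |w h| ≤ ‖w‖ * ε := by
    intro ε hε
    have hcont : ∀ k : Fin K, ∃ δ : ℝ, 0 < δ ∧ ∀ z, dist z (x k) < δ → |h z| ≤ ε := by
      intro k
      obtain ⟨δ, hδ, hδ'⟩ := Metric.continuous_iff.mp h.continuous (x k) ε hε
      refine ⟨δ, hδ, fun z hz => ?_⟩
      have := hδ' z hz
      rw [Real.dist_eq, hh k, sub_zero] at this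
      exact this.le
    choose δ hδpos hδ using hcont
    set χ : C(X, ℝ) := ⟨fun z => min 1 (∑ k, fjBump (x k) (δ k) z), by
      refine continuous_const.min ?_
      exact continuous_finset_sum _ fun k _ => (fjBump (x k) (δ k)).continuous⟩ with hχ
    have hχ_apply : ∀ z, χ z = min 1 (∑ k, fjBump (x k) (δ k) z) := fun z => rfl
    have hχ0 : ∀ z, 0 ≤ χ z := fun z => by
      rw [hχ_apply]
      exact le_min one_pos.le (Finset.sum_nonneg fun k _ => fjBump_nonneg _ _ _)
    have hχ1 : ∀ z, χ z ≤ 1 := fun z => min_le_left _ _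
    have hsplit : w h = w (h * χ) + w (h * (1 - χ)) := by
      rw [← map_add]; congr 1; ring
    have hpart1 : |w (h * χ)| ≤ ‖w‖ * ε := by
      have hb : ‖h * χ‖ ≤ ε := by
        refine (ContinuousMap.norm_le _ hε.le).mpr fun z => ?_
        rw [ContinuousMap.mul_apply, Real.norm_eq_abs, abs_mul]
        rcases eq_or_ne (χ z) 0 with h0 | h0
        · rw [h0, abs_zero, mul_zero]; exact hε.le
        · have hzlt : |h z| ≤ ε := by
            have hsne : (∑ k, fjBump (x k) (δ k) z) ≠ 0 := by
              intro hc
              apply h0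
              rw [hχ_apply, hc]
              exact min_eq_right zero_le_one
            obtain ⟨k, -, hk⟩ := Finset.exists_ne_zero_of_sum_ne_zero hsne
            exact hδ k z (fjBump_ne_zero_lt (hδpos k) hk)
          calc |h z| * |χ z| ≤ ε * 1 :=
                mul_le_mul hzlt (by rw [abs_of_nonneg (hχ0 z)]; exact hχ1 z)
                  (abs_nonneg _) hε.le
          _ = ε := mul_one ε
      calc |w (h * χ)| ≤ ‖w‖ * ‖h * χ‖ := by
            have := w.le_opNorm (h * χ); rwa [Real.norm_eq_abs] at this
      _ ≤ ‖w‖ * ε := mul_le_mul_of_nonneg_left hb (norm_nonneg w)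
    have hpart2 : w (h * (1 - χ)) = 0 := by
      set u : C(X, ℝ) := h * (1 - χ) with hu
      set Cs : Set X := {z | ∀ k, δ k / 2 ≤ dist z (x k)} with hCsdef
      have hCs_closed : IsClosed Cs := by
        have : Cs = ⋂ k, {z : X | δ k / 2 ≤ dist z (x k)} := by
          ext z; simp [hCsdef, Set.mem_iInter]
        rw [this]
        exact isClosed_iInter fun k =>
          isClosed_le continuous_const (continuous_id.dist continuous_const)
      have hCs_compact : IsCompact Cs := hCs_closed.isCompact
      have hu_off : ∀ z, z ∉ Cs → u z = 0 := by
        intro z hz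
        simp only [hCsdef, Set.mem_setOf_eq, not_forall, not_le] at hz
        obtain ⟨k, hk⟩ := hz
        have h1 : fjBump (x k) (δ k) z = 1 := fjBump_eq_one (hδpos k) hk.le
        have hsge : (1 : ℝ) ≤ ∑ j, fjBump (x j) (δ j) z := by
          calc (1 : ℝ) = fjBump (x k) (δ k) z := h1.symm
          _ ≤ ∑ j, fjBump (x j) (δ j) z :=
              Finset.single_le_sum (fun j _ => fjBump_nonneg _ _ _) (Finset.mem_univ k)
        have hχz : χ z = 1 := by rw [hχ_apply]; exact min_eq_left hsge
        simp [hu, ContinuousMap.mul_apply, ContinuousMap.sub_apply, hχz]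
      have hCs_null : ∀ y : X, y ∈ Cs → ∀ k, y ≠ x k := by
        intro y hy k hyk
        have h1 := hy k
        rw [hyk, dist_self] at h1
        have := hδpos k
        linarith
      choose r hrpos hrnull using fun (y : Cs) => hnull (y : X) (hCs_null y y.2)
      have hcover : Cs ⊆ ⋃ y : Cs, Metric.ball (y : X) (r y / 2) := by
        intro z hz
        exact Set.mem_iUnion.mpr ⟨⟨z, hz⟩, Metric.mem_ball_self (half_pos (hrpos ⟨z, hz⟩))⟩
      obtain ⟨t, ht⟩ := hCs_compact.elim_finite_subcover
        (fun y : Cs => Metric.ball (y : X) (r y / 2)) (fun y => Metric.isOpen_ball) hcover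
      set L := t.toList with hL
      set n := L.length with hn
      set θ : ℕ → C(X, ℝ) := fun j =>
        if hj : j < n then fjBump ((L.get ⟨j, hj⟩ : Cs) : X) (r (L.get ⟨j, hj⟩)) else 0 with hθ
      have hcoef : (∑ j ∈ Finset.range n, θ j * ∏ i ∈ Finset.range j, (1 - θ i))
          + ∏ i ∈ Finset.range n, (1 - θ i) = 1 := by
        rw [fj_prod_one_sub]; ring
      have hid : u = (∑ j ∈ Finset.range n, u * (θ j * ∏ i ∈ Finset.range j, (1 - θ i)))
          + u * ∏ i ∈ Finset.range n, (1 - θ i) := by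
        calc u = u * 1 := (mul_one u).symm
        _ = u * ((∑ j ∈ Finset.range n, θ j * ∏ i ∈ Finset.range j, (1 - θ i))
            + ∏ i ∈ Finset.range n, (1 - θ i)) := by rw [hcoef]
        _ = _ := by rw [mul_add, Finset.mul_sum]
      have hterm : ∀ j ∈ Finset.range n,
          w (u * (θ j * ∏ i ∈ Finset.range j, (1 - θ i))) = 0 := by
        intro j hj
        rw [Finset.mem_range] at hj
        refine hrnull (L.get ⟨j, hj⟩) _ (fun z hz => ?_)
        have hbz : θ j z = 0 := by
          rw [hθ]
          simp only [dif_pos hj]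
          exact fjBump_eq_zero (hrpos _) hz
        simp [ContinuousMap.mul_apply, hbz]
      have hlast : u * ∏ i ∈ Finset.range n, (1 - θ i) = 0 := by
        ext z
        simp only [ContinuousMap.mul_apply, ContinuousMap.zero_apply]
        rcases eq_or_ne (u z) 0 with h0 | h0
        · rw [h0, zero_mul]
        · have hzC : z ∈ Cs := by
            by_contra hc; exact h0 (hu_off z hc)
          obtain ⟨y, hyt, hy⟩ : ∃ y ∈ t, z ∈ Metric.ball (y : X) (r y / 2) := by
            have := ht hzC
            simpa using this
          obtain ⟨jfin, hjget⟩ := List.mem_iff_get.mp (Finset.mem_toList.mpr hyt)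
          have hθ1 : θ (jfin : ℕ) z = 1 := by
            rw [hθ]
            simp +zetaDelta only [dif_pos jfin.isLt, Fin.eta, hjget]
            refine fjBump_eq_one (X := X) (hrpos y) ?_
            rw [Metric.mem_ball] at hy
            linarith [hy]
          have hprod : (∏ i ∈ Finset.range n, (1 - θ i)) z = 0 := by
            rw [ContinuousMap.prod_apply]
            refine Finset.prod_eq_zero (Finset.mem_range.mpr jfin.isLt) ?_
            simp [ContinuousMap.sub_apply, hθ1]
          rw [hprod, mul_zero]
      calc w u = (∑ j ∈ Finset.range n, w (u * (θ j * ∏ i ∈ Finset.range j, (1 - θ i))))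
            + w (u * ∏ i ∈ Finset.range n, (1 - θ i)) := by
            rw [← map_sum, ← map_add, ← hid]
      _ = 0 := by rw [Finset.sum_eq_zero hterm, hlast, map_zero, add_zero]
    rw [hsplit, hpart2, add_zero]
    exact hpart1
  have habs : |w h| ≤ 0 := by
    refine le_of_forall_pos_le_add fun ε hε => ?_
    have h1 := main (ε / (‖w‖ + 1)) (by positivity)
    have hle : ‖w‖ * (ε / (‖w‖ + 1)) ≤ ε := by
      rw [← mul_div_assoc, div_le_iff₀ (by positivity : (0 : ℝ) < ‖w‖ + 1)]
      nlinarith [norm_nonneg w, hε.le]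
    linarith
  exact abs_nonpos_iff.mp habs


/-- separation of an injective finite family -/
lemma fj_exists_sep {K : ℕ} (x : Fin K → X) (hx : Function.Injective x) :
    ∃ δ : ℝ, 0 < δ ∧ ∀ i j, i ≠ j → 5 * δ ≤ dist (x i) (x j) := by
  by_cases hs : ((Finset.univ : Finset (Fin K)).offDiag).Nonempty
  · refine ⟨(Finset.univ.offDiag.inf' hs fun p => dist (x p.1) (x p.2)) / 5, ?_, ?_⟩
    · have : ∀ p ∈ Finset.univ.offDiag, 0 < dist (x p.1) (x p.2) := by
        intro p hp
        rw [Finset.mem_offDiag] at hp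
        exact dist_pos.mpr fun h => hp.2.2 (hx h)
      have := (Finset.lt_inf'_iff hs (f := fun p : Fin K × Fin K => dist (x p.1) (x p.2))
        (a := 0)).mpr this
      linarith
    · intro i j hij
      have hmem : (i, j) ∈ Finset.univ.offDiag := by
        rw [Finset.mem_offDiag]; exact ⟨Finset.mem_univ _, Finset.mem_univ _, hij⟩
      have := Finset.inf'_le (fun p : Fin K × Fin K => dist (x p.1) (x p.2)) hmem
      linarith
  · refine ⟨1, one_pos, fun i j hij => absurd ?_ hs⟩
    exact ⟨(i, j), by rw [Finset.mem_offDiag]; exact ⟨Finset.mem_univ _, Finset.mem_univ _, hij⟩⟩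


/-- multiplication perturbation of a functional -/
noncomputable def fjMul (w : StrongDual ℝ C(X, ℝ)) (f : C(X, ℝ)) : StrongDual ℝ C(X, ℝ) :=
  w.comp (ContinuousLinearMap.mul ℝ C(X, ℝ) f)

lemma fjMul_apply (w : StrongDual ℝ C(X, ℝ)) (f g : C(X, ℝ)) : fjMul w f g = w (f * g) := rfl

lemma fj_exists_near_norm (u : StrongDual ℝ C(X, ℝ)) {ε : ℝ} (hε : 0 < ε) :
    ∃ g : C(X, ℝ), ‖g‖ ≤ 1 ∧ ‖u‖ ≤ u g + ε := by
  rcases le_or_gt ‖u‖ ε with h | h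
  · exact ⟨0, by simp, by simpa using h⟩
  · obtain ⟨g, hg1, hg2⟩ := u.exists_lt_apply_of_lt_opNorm (show ‖u‖ - ε < ‖u‖ by linarith)
    rw [Real.norm_eq_abs] at hg2
    rcases le_or_gt 0 (u g) with h0 | h0
    · rw [abs_of_nonneg h0] at hg2
      exact ⟨g, hg1.le, by linarith⟩
    · refine ⟨-g, by simpa using hg1.le, ?_⟩
      rw [map_neg]
      rw [abs_of_neg h0] at hg2; linarith

set_option maxHeartbeats 1000000 in
lemma fj_perturb_norm (w : StrongDual ℝ C(X, ℝ)) {n : ℕ} (b : Fin n → C(X, ℝ)) (s : Fin n → ℝ)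
    (hb0 : ∀ i z, 0 ≤ b i z) (hsum : ∀ z, ∑ i, b i z ≤ 1) (hs : ∀ i, |s i| ≤ 1) :
    ‖w + ∑ i, s i • fjMul w (b i)‖ + ‖w - ∑ i, s i • fjMul w (b i)‖ ≤ 2 * ‖w‖ := by
  set ν := ∑ i, s i • fjMul w (b i) with hν
  refine le_of_forall_pos_le_add fun ε hε => ?_
  obtain ⟨g, hg, hg2⟩ := fj_exists_near_norm (w + ν) (half_pos hε)
  obtain ⟨g', hg', hg2'⟩ := fj_exists_near_norm (w - ν) (half_pos hε)
  have key : (w + ν) g + (w - ν) g' ≤ 2 * ‖w‖ := by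
    have expand : (w + ν) g + (w - ν) g'
        = w (g + g' + ∑ i, s i • (b i * (g - g'))) := by
      simp only [hν, ContinuousLinearMap.add_apply, ContinuousLinearMap.coe_sub',
        Pi.sub_apply, ContinuousLinearMap.coe_sum', Finset.sum_apply,
        ContinuousLinearMap.coe_smul', Pi.smul_apply, fjMul_apply, smul_eq_mul,
        map_add, map_sum, _root_.map_smul, mul_sub, map_sub]
      rw [Finset.sum_sub_distrib]
      ring
    have hF : ‖g + g' + ∑ i, s i • (b i * (g - g'))‖ ≤ 2 := by
      refine (ContinuousMap.norm_le _ (by norm_num)).mpr fun z => ?_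
      have hgz : |g z| ≤ 1 := by
        have := g.norm_coe_le_norm z; rw [Real.norm_eq_abs] at this; linarith
      have hgz' : |g' z| ≤ 1 := by
        have := g'.norm_coe_le_norm z; rw [Real.norm_eq_abs] at this; linarith
      have hσ : |∑ i, s i * b i z| ≤ 1 := by
        calc |∑ i, s i * b i z| ≤ ∑ i, |s i * b i z| := Finset.abs_sum_le_sum_abs _ _
        _ ≤ ∑ i, b i z := by
            refine Finset.sum_le_sum fun i _ => ?_
            rw [abs_mul, abs_of_nonneg (hb0 i z)]
            exact mul_le_of_le_one_left (hb0 i z) (hs i)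
        _ ≤ 1 := hsum z
      have hsum_eq : ∑ i, s i * (b i z * (g z - g' z)) = (∑ i, s i * b i z) * (g z - g' z) := by
        rw [Finset.sum_mul]
        exact Finset.sum_congr rfl fun i _ => by ring
      have heval : (g + g' + ∑ i, s i • (b i * (g - g'))) z
          = g z + g' z + (∑ i, s i * b i z) * (g z - g' z) := by
        simp only [ContinuousMap.add_apply, ContinuousMap.sum_apply, ContinuousMap.smul_apply,
          ContinuousMap.mul_apply, ContinuousMap.sub_apply, smul_eq_mul]
        rw [hsum_eq]
      rw [Real.norm_eq_abs, heval]
      set a := g z; set a' := g' z; set σ := ∑ i, s i * b i z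
      rw [abs_le] at hgz hgz' hσ ⊢
      constructor <;> nlinarith [mul_nonneg (by linarith : (0:ℝ) ≤ 1 + σ) (by linarith : (0:ℝ) ≤ 1 - a),
        mul_nonneg (by linarith : (0:ℝ) ≤ 1 + σ) (by linarith : (0:ℝ) ≤ 1 + a),
        mul_nonneg (by linarith : (0:ℝ) ≤ 1 - σ) (by linarith : (0:ℝ) ≤ 1 - a'),
        mul_nonneg (by linarith : (0:ℝ) ≤ 1 - σ) (by linarith : (0:ℝ) ≤ 1 + a')]
    calc (w + ν) g + (w - ν) g' = w (g + g' + ∑ i, s i • (b i * (g - g'))) := expand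
    _ ≤ |w (g + g' + ∑ i, s i • (b i * (g - g')))| := le_abs_self _
    _ ≤ ‖w‖ * ‖g + g' + ∑ i, s i • (b i * (g - g'))‖ := by
        have := w.le_opNorm (g + g' + ∑ i, s i • (b i * (g - g')))
        rwa [Real.norm_eq_abs] at this
    _ ≤ ‖w‖ * 2 := by
        exact mul_le_mul_of_nonneg_left hF (norm_nonneg w)
    _ = 2 * ‖w‖ := by ring
  have h1 : ‖w + ν‖ ≤ (w + ν) g + ε / 2 := hg2
  have h2 : ‖w - ν‖ ≤ (w - ν) g' + ε / 2 := hg2'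
  linarith


end FJAux

section Nip
variable {d : ℕ}

lemma fj_integrable (g h : C(Torus d, ℝ)) :
    Integrable (fun x : Torus d => g x * h x) volume :=
  (g.continuous.mul h.continuous).integrable_of_hasCompactSupport
    (HasCompactSupport.of_compactSpace _)

noncomputable def nipLin (g : C(Torus d, ℝ)) : C(Torus d, ℝ) →ₗ[ℝ] ℝ where
  toFun h := nip g h
  map_add' h₁ h₂ := by
    show nip g (h₁ + h₂) = nip g h₁ + nip g h₂
    unfold nip
    have : (fun x : Torus d => g x * (h₁ + h₂) x)
        = fun x => g x * h₁ x + g x * h₂ x := by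
      funext x; simp [ContinuousMap.add_apply]; ring
    rw [this, integral_add (fj_integrable g h₁) (fj_integrable g h₂)]
    ring
  map_smul' c h := by
    show nip g (c • h) = c • nip g h
    unfold nip
    have : (fun x : Torus d => g x * (c • h) x) = fun x => c * (g x * h x) := by
      funext x; simp [ContinuousMap.smul_apply]; ring
    rw [this, integral_const_mul]
    simp; ring

lemma nipLin_apply (g h : C(Torus d, ℝ)) : nipLin g h = nip g h := rfl

lemma nip_bound (g h : C(Torus d, ℝ)) :
    |nip g h| ≤ (((2 * π) ^ d)⁻¹ * (volume (Set.univ : Set (Torus d))).toReal * ‖g‖) * ‖h‖ := by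
  unfold nip
  rw [abs_mul]
  have hint : ‖∫ x : Torus d, g x * h x‖ ≤ (‖g‖ * ‖h‖) * (volume (Set.univ : Set (Torus d))).toReal := by
    refine norm_integral_le_of_norm_le_const ?_
    filter_upwards with x
    rw [Real.norm_eq_abs, abs_mul]
    exact mul_le_mul (by simpa [Real.norm_eq_abs] using g.norm_coe_le_norm x)
      (by simpa [Real.norm_eq_abs] using h.norm_coe_le_norm x) (abs_nonneg _) (norm_nonneg _)
  rw [Real.norm_eq_abs] at hint
  have hc : |((2 * π) ^ d)⁻¹| = ((2 * π) ^ d)⁻¹ := abs_of_nonneg (by positivity)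
  rw [hc]
  calc ((2 * π) ^ d)⁻¹ * |∫ x : Torus d, g x * h x|
      ≤ ((2 * π) ^ d)⁻¹ * ((‖g‖ * ‖h‖) * (volume (Set.univ : Set (Torus d))).toReal) := by
        exact mul_le_mul_of_nonneg_left hint (by positivity)
  _ = (((2 * π) ^ d)⁻¹ * (volume (Set.univ : Set (Torus d))).toReal * ‖g‖) * ‖h‖ := by ring

noncomputable def nipCLM (g : C(Torus d, ℝ)) : C(Torus d, ℝ) →L[ℝ] ℝ :=
  LinearMap.mkContinuous (nipLin g)
    (((2 * π) ^ d)⁻¹ * (volume (Set.univ : Set (Torus d))).toReal * ‖g‖)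
    (fun h => by simpa [Real.norm_eq_abs, nipLin_apply] using nip_bound g h)

lemma nipCLM_apply (g h : C(Torus d, ℝ)) : nipCLM g h = nip g h := rfl

lemma nip_add_right (g h₁ h₂ : C(Torus d, ℝ)) : nip g (h₁ + h₂) = nip g h₁ + nip g h₂ :=
  (nipLin g).map_add h₁ h₂

lemma nip_sub_right (g h₁ h₂ : C(Torus d, ℝ)) : nip g (h₁ - h₂) = nip g h₁ - nip g h₂ :=
  (nipLin g).map_sub h₁ h₂

lemma nip_smul_right (g h : C(Torus d, ℝ)) (c : ℝ) : nip g (c • h) = c * nip g h :=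
  (nipLin g).map_smul c h

lemma nip_continuous_right (g : C(Torus d, ℝ)) :
    Continuous fun h : C(Torus d, ℝ) => nip g h := by
  have h1 : (fun h : C(Torus d, ℝ) => nip g h) = ⇑(nipCLM g) := by
    funext h; rw [nipCLM_apply]
  rw [h1]; exact (nipCLM g).continuous

end Nip

lemma fj_opNorm_le {E : Type*} [NormedAddCommGroup E] [NormedSpace ℝ E] (u : E →L[ℝ] ℝ) {r : ℝ}
    (hr : 0 ≤ r) (h : ∀ g : E, ‖g‖ ≤ 1 → ‖u g‖ ≤ r) : ‖u‖ ≤ r := by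
  refine u.opNorm_le_bound hr (fun g => ?_)
  rcases eq_or_ne g 0 with rfl | hg
  · simp
  · have hg' : 0 < ‖g‖ := norm_pos_iff.mpr hg
    have h1 := h (‖g‖⁻¹ • g) (by
      rw [norm_smul, norm_inv, norm_norm, inv_mul_cancel₀ hg'.ne'])
    rw [_root_.map_smul, norm_smul, norm_inv, norm_norm] at h1
    calc ‖u g‖ = ‖g‖ * (‖g‖⁻¹ * ‖u g‖) := by field_simp
    _ ≤ ‖g‖ * r := mul_le_mul_of_nonneg_left h1 hg'.le
    _ = r * ‖g‖ := mul_comm _ _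


set_option maxHeartbeats 2000000 in
/-- Fisher–Jerome-type theorem on the torus: minimizing the total-variation norm of `w`
over the affine feasibility set yields a nonempty, convex, weak*-compact set of
minimizers whose extreme points have Dirac-stream first components with at most `M`
knots. -/
theorem fisher_jerome_torus
    (d : ℕ) (hd : 1 ≤ d) (F : Finset (Fin d → ℤ)) (hF : ∀ k ∈ F, -k ∈ F)
    (N : Submodule ℝ C(Torus d, ℝ))
    (hN : N = Submodule.span ℝ
      ((fun k => trigCos k) '' (F : Set (Fin d → ℤ)) ∪
        (fun k => trigSin k) '' (F : Set (Fin d → ℤ))))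
    (M : ℕ) (hM : Module.finrank ℝ N ≤ M)
    (f q : Fin M → C(Torus d, ℝ)) (hq : ∀ m, q m ∈ N)
    (hindep : LinearIndependent ℝ
      (fun m : Fin M => ((f m, q m) : C(Torus d, ℝ) × C(Torus d, ℝ))))
    (hf : ∀ m, ∀ k ∈ F,
      (∫ x : Torus d, f m x * trigCos k x) = 0 ∧
      (∫ x : Torus d, f m x * trigSin k x) = 0)
    (hinj : ∀ p ∈ N, (∀ m, nip (q m) p = 0) → p = 0)
    (z₀ : Fin M → ℝ)
    (W : Set (StrongDual ℝ C(Torus d, ℝ)))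
    (hW : W = {w | ∀ φ ∈ N, w φ = 0})
    (S : Set (StrongDual ℝ C(Torus d, ℝ) × C(Torus d, ℝ)))
    (hS : S = {wp | wp.1 ∈ W ∧ wp.2 ∈ N ∧ ∀ m, wp.1 (f m) + nip (q m) wp.2 = z₀ m})
    (hfeas : S.Nonempty)
    (V : Set (StrongDual ℝ C(Torus d, ℝ) × C(Torus d, ℝ)))
    (hV : V = {wp ∈ S | ∀ wp' ∈ S, ‖wp.1‖ ≤ ‖wp'.1‖}) :
    V.Nonempty ∧ Convex ℝ V ∧
      IsCompact ((fun wp : StrongDual ℝ C(Torus d, ℝ) × C(Torus d, ℝ) =>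
        (StrongDual.toWeakDual wp.1, wp.2)) '' V) ∧
      ∀ wp ∈ Set.extremePoints ℝ V, ∃ K : ℕ, K ≤ M ∧
        ∃ (a : Fin K → ℝ) (x : Fin K → Torus d),
          Function.Injective x ∧ wp.1 = ∑ k, a k • dirac (x k) := by
  classical
  -- finite dimensionality of N
  have hfinN : FiniteDimensional ℝ ↥N := by
    rw [hN]
    apply FiniteDimensional.span_of_finite
    exact (F.finite_toSet.image _).union (F.finite_toSet.image _)
  -- the measurement map on N
  set T : ↥N →ₗ[ℝ] (Fin M → ℝ) := LinearMap.pi (fun m => (nipLin (q m)).comp N.subtype)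
    with hTdef
  have hT_apply : ∀ (p : ↥N) (m : Fin M), T p m = nip (q m) ↑p := by
    intro p m
    simp [hTdef, LinearMap.pi_apply, nipLin_apply]
  have hTinj : Function.Injective T := by
    rw [← LinearMap.ker_eq_bot, LinearMap.ker_eq_bot']
    intro p hp
    refine Subtype.ext (hinj ↑p p.2 (fun m => ?_))
    have := congrFun hp m
    rwa [hT_apply] at this
  -- inverse bound
  obtain ⟨Cb, hCb0, hCb⟩ : ∃ Cb : ℝ, 0 ≤ Cb ∧ ∀ p : ↥N, ‖p‖ ≤ Cb * ‖T p‖ := by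
    set e := LinearEquiv.ofInjective T hTinj with hedef
    have hcont : Continuous (N.subtype ∘ₗ (e.symm : ↥(LinearMap.range T) →ₗ[ℝ] ↥N)) :=
      LinearMap.continuous_of_finiteDimensional _
    set ec : ↥(LinearMap.range T) →L[ℝ] C(Torus d, ℝ) :=
      ⟨N.subtype ∘ₗ (e.symm : ↥(LinearMap.range T) →ₗ[ℝ] ↥N), hcont⟩
      with hecdef
    refine ⟨‖ec‖, ec.opNorm_nonneg, fun p => ?_⟩
    have h1 : ec (e p) = (p : C(Torus d, ℝ)) := congrArg Subtype.val (e.symm_apply_apply p)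
    have h2 : ‖(e p : Fin M → ℝ)‖ = ‖T p‖ := by
      congr 1
    calc ‖p‖ = ‖(p : C(Torus d, ℝ))‖ := rfl
    _ = ‖ec (e p)‖ := by rw [h1]
    _ ≤ ‖ec‖ * ‖e p‖ := ec.le_opNorm _
    _ = ‖ec‖ * ‖T p‖ := by rw [← h2]; rfl
  -- the homeomorphic copy map
  set Φ : StrongDual ℝ C(Torus d, ℝ) × C(Torus d, ℝ) → WeakDual ℝ C(Torus d, ℝ) × C(Torus d, ℝ) :=
    fun wp => (StrongDual.toWeakDual wp.1, wp.2) with hΦdef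
  have hΦinj : Function.Injective Φ := by
    intro a b hab
    rw [Prod.ext_iff] at hab ⊢
    exact ⟨StrongDual.toWeakDual.injective hab.1, hab.2⟩
  -- compactness of truncated feasible sets
  have hcomp : ∀ r : ℝ, 0 ≤ r → IsCompact (Φ '' {wp | wp ∈ S ∧ ‖wp.1‖ ≤ r}) := by
    intro r hr
    set Bf : ℝ := ∑ m, ‖f m‖ with hBfdef
    set Zb : ℝ := ∑ m, |z₀ m| with hZbdef
    have hBfm : ∀ m, ‖f m‖ ≤ Bf := fun m =>
      Finset.single_le_sum (fun m _ => norm_nonneg (f m)) (Finset.mem_univ m)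
    have hZbm : ∀ m, |z₀ m| ≤ Zb := fun m =>
      Finset.single_le_sum (fun m _ => abs_nonneg (z₀ m)) (Finset.mem_univ m)
    have hBf0 : 0 ≤ Bf := Finset.sum_nonneg fun m _ => norm_nonneg _
    have hZb0 : 0 ≤ Zb := Finset.sum_nonneg fun m _ => abs_nonneg _
    set R : ℝ := Cb * (Zb + r * Bf) with hRdef
    have himg : Φ '' {wp | wp ∈ S ∧ ‖wp.1‖ ≤ r} =
        {ωp : WeakDual ℝ C(Torus d, ℝ) × C(Torus d, ℝ) |
          (∀ φ ∈ N, ωp.1 φ = 0) ∧ ωp.2 ∈ N ∧ (∀ m, ωp.1 (f m) + nip (q m) ωp.2 = z₀ m) ∧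
          ∀ g : C(Torus d, ℝ), ‖g‖ ≤ 1 → ‖ωp.1 g‖ ≤ r} := by
      ext ωp
      constructor
      · rintro ⟨wp, ⟨hwpS, hwpn⟩, rfl⟩
        rw [hS] at hwpS
        obtain ⟨hw1, hw2, hw3⟩ := hwpS
        rw [hW] at hw1
        refine ⟨fun φ hφ => hw1 φ hφ, hw2, fun m => hw3 m, fun g hg => ?_⟩
        calc ‖(Φ wp).1 g‖ = ‖wp.1 g‖ := rfl
        _ ≤ ‖wp.1‖ * ‖g‖ := wp.1.le_opNorm g
        _ ≤ r * 1 := mul_le_mul hwpn hg (norm_nonneg _) hr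
        _ = r := mul_one r
      · rintro ⟨h1, h2, h3, h4⟩
        refine ⟨(WeakDual.toStrongDual ωp.1, ωp.2), ⟨?_, ?_⟩, rfl⟩
        · rw [hS]
          refine ⟨?_, h2, h3⟩
          rw [hW]
          exact h1
        · exact fj_opNorm_le _ hr h4
    have hclosed : IsClosed {ωp : WeakDual ℝ C(Torus d, ℝ) × C(Torus d, ℝ) |
          (∀ φ ∈ N, ωp.1 φ = 0) ∧ ωp.2 ∈ N ∧ (∀ m, ωp.1 (f m) + nip (q m) ωp.2 = z₀ m) ∧
          ∀ g : C(Torus d, ℝ), ‖g‖ ≤ 1 → ‖ωp.1 g‖ ≤ r} := by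
      have hc1 : IsClosed {ωp : WeakDual ℝ C(Torus d, ℝ) × C(Torus d, ℝ) |
          ∀ φ ∈ N, ωp.1 φ = 0} := by
        rw [show {ωp : WeakDual ℝ C(Torus d, ℝ) × C(Torus d, ℝ) | ∀ φ ∈ N, ωp.1 φ = 0}
            = ⋂ φ ∈ (N : Set C(Torus d, ℝ)),
              {ωp : WeakDual ℝ C(Torus d, ℝ) × C(Torus d, ℝ) | ωp.1 φ = 0} by
          ext ωp; simp]
        exact isClosed_biInter fun φ hφ =>
          isClosed_eq ((WeakDual.eval_continuous φ).comp continuous_fst) continuous_const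
      have hc2 : IsClosed {ωp : WeakDual ℝ C(Torus d, ℝ) × C(Torus d, ℝ) | ωp.2 ∈ N} :=
        (N.closed_of_finiteDimensional).preimage continuous_snd
      have hc3 : IsClosed {ωp : WeakDual ℝ C(Torus d, ℝ) × C(Torus d, ℝ) |
          ∀ m, ωp.1 (f m) + nip (q m) ωp.2 = z₀ m} := by
        rw [show {ωp : WeakDual ℝ C(Torus d, ℝ) × C(Torus d, ℝ) |
            ∀ m, ωp.1 (f m) + nip (q m) ωp.2 = z₀ m}
            = ⋂ m, {ωp : WeakDual ℝ C(Torus d, ℝ) × C(Torus d, ℝ) |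
              ωp.1 (f m) + nip (q m) ωp.2 = z₀ m} by
          ext ωp; simp [Set.mem_iInter]]
        refine isClosed_iInter fun m => isClosed_eq ?_ continuous_const
        exact Continuous.add ((WeakDual.eval_continuous (f m)).comp continuous_fst)
          ((nip_continuous_right (q m)).comp continuous_snd)
      have hc4 : IsClosed {ωp : WeakDual ℝ C(Torus d, ℝ) × C(Torus d, ℝ) |
          ∀ g : C(Torus d, ℝ), ‖g‖ ≤ 1 → ‖ωp.1 g‖ ≤ r} := by
        rw [show {ωp : WeakDual ℝ C(Torus d, ℝ) × C(Torus d, ℝ) |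
            ∀ g : C(Torus d, ℝ), ‖g‖ ≤ 1 → ‖ωp.1 g‖ ≤ r}
            = ⋂ (g : C(Torus d, ℝ)) (_ : ‖g‖ ≤ 1),
              {ωp : WeakDual ℝ C(Torus d, ℝ) × C(Torus d, ℝ) | ‖ωp.1 g‖ ≤ r} by
          ext ωp; simp [Set.mem_iInter]]
        exact isClosed_iInter fun g => isClosed_iInter fun hg =>
          isClosed_le ((WeakDual.eval_continuous g).comp continuous_fst).norm continuous_const
      simp only [Set.setOf_and]
      exact (hc1.inter (hc2.inter (hc3.inter hc4)) : _)
    have hsub : {ωp : WeakDual ℝ C(Torus d, ℝ) × C(Torus d, ℝ) |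
          (∀ φ ∈ N, ωp.1 φ = 0) ∧ ωp.2 ∈ N ∧ (∀ m, ωp.1 (f m) + nip (q m) ωp.2 = z₀ m) ∧
          ∀ g : C(Torus d, ℝ), ‖g‖ ≤ 1 → ‖ωp.1 g‖ ≤ r} ⊆
        (WeakDual.toStrongDual ⁻¹' Metric.closedBall (0 : StrongDual ℝ C(Torus d, ℝ)) r) ×ˢ
          (Subtype.val '' Metric.closedBall (0 : ↥N) R) := by
      rintro ωp ⟨h1, h2, h3, h4⟩
      have hn1 : ‖WeakDual.toStrongDual ωp.1‖ ≤ r := fj_opNorm_le _ hr h4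
      constructor
      · rw [Set.mem_preimage, Metric.mem_closedBall]
        exact (dist_zero_right (WeakDual.toStrongDual ωp.1)).trans_le hn1
      · refine ⟨⟨ωp.2, h2⟩, ?_, rfl⟩
        rw [Metric.mem_closedBall, dist_zero_right]
        have hTb : ‖T ⟨ωp.2, h2⟩‖ ≤ Zb + r * Bf := by
          rw [pi_norm_le_iff_of_nonneg (by positivity)]
          intro m
          rw [hT_apply]
          have hm := h3 m
          have heq : nip (q m) ωp.2 = z₀ m - ωp.1 (f m) := by linarith
          rw [Real.norm_eq_abs, heq]
          have hev : |ωp.1 (f m)| ≤ r * Bf := by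
            have : ‖(WeakDual.toStrongDual ωp.1) (f m)‖
                ≤ ‖WeakDual.toStrongDual ωp.1‖ * ‖f m‖ := ContinuousLinearMap.le_opNorm _ _
            rw [Real.norm_eq_abs] at this
            calc |ωp.1 (f m)| ≤ ‖WeakDual.toStrongDual ωp.1‖ * ‖f m‖ := this
            _ ≤ r * Bf := mul_le_mul hn1 (hBfm m) (norm_nonneg _) hr
          calc |z₀ m - ωp.1 (f m)| ≤ |z₀ m| + |ωp.1 (f m)| := abs_sub _ _
          _ ≤ Zb + r * Bf := add_le_add (hZbm m) hev
        calc ‖(⟨ωp.2, h2⟩ : ↥N)‖ ≤ Cb * ‖T ⟨ωp.2, h2⟩‖ := hCb _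
        _ ≤ Cb * (Zb + r * Bf) := mul_le_mul_of_nonneg_left hTb hCb0
    have hsuper : IsCompact ((WeakDual.toStrongDual ⁻¹' Metric.closedBall (0 : StrongDual ℝ C(Torus d, ℝ)) r) ×ˢ
        (Subtype.val '' Metric.closedBall (0 : ↥N) R)) := by
      refine (WeakDual.isCompact_closedBall (0 : StrongDual ℝ C(Torus d, ℝ)) r).prod ?_
      haveI : ProperSpace ↥N := FiniteDimensional.proper ℝ ↥N
      exact (isCompact_closedBall (0 : ↥N) R).image continuous_subtype_val
    rw [himg]
    exact IsCompact.of_isClosed_subset hsuper hclosed hsub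
  -- infimum and a minimizer
  have hlbS : ∀ a ∈ (fun wp : StrongDual ℝ C(Torus d, ℝ) × C(Torus d, ℝ) => ‖wp.1‖) '' S, 0 ≤ a := by
    rintro a ⟨wp, -, rfl⟩; exact norm_nonneg wp.1
  set cI : ℝ := sInf ((fun wp : StrongDual ℝ C(Torus d, ℝ) × C(Torus d, ℝ) => ‖wp.1‖) '' S) with hcIdef
  have hcI0 : 0 ≤ cI := Real.sInf_nonneg hlbS
  have hbdd : BddBelow ((fun wp : StrongDual ℝ C(Torus d, ℝ) × C(Torus d, ℝ) => ‖wp.1‖) '' S) :=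
    ⟨0, hlbS⟩
  have hlb : ∀ wp' ∈ S, cI ≤ ‖wp'.1‖ := fun wp' h => csInf_le hbdd ⟨wp', h, rfl⟩
  obtain ⟨wp₀, hwp₀V⟩ : V.Nonempty := by
    set A : ℕ → Set (WeakDual ℝ C(Torus d, ℝ) × C(Torus d, ℝ)) :=
      fun nn => Φ '' {wp | wp ∈ S ∧ ‖wp.1‖ ≤ cI + 1 / ((nn : ℝ) + 1)} with hAdef
    have hApos : ∀ nn : ℕ, (0 : ℝ) < 1 / ((nn : ℝ) + 1) := fun nn => by positivity
    have hAcomp : ∀ nn, IsCompact (A nn) := fun nn => hcomp _ (by positivity)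
    have hAne : ∀ nn, (A nn).Nonempty := by
      intro nn
      have hlt : cI < cI + 1 / ((nn : ℝ) + 1) := lt_add_of_pos_right _ (hApos nn)
      obtain ⟨aa, ⟨wp, hwpS, rfl⟩, ha⟩ := exists_lt_of_csInf_lt (hfeas.image _) hlt
      exact ⟨Φ wp, ⟨wp, ⟨hwpS, ha.le⟩, rfl⟩⟩
    have hAmono : ∀ nn : ℕ, A (nn + 1) ⊆ A nn := by
      intro nn
      apply Set.image_mono
      rintro wp ⟨h1, h2⟩
      refine ⟨h1, h2.trans (add_le_add_right ?_ _)⟩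
      apply one_div_le_one_div_of_le (by positivity)
      push_cast; linarith
    obtain ⟨ωp, hωp⟩ := IsCompact.nonempty_iInter_of_sequence_nonempty_isCompact_isClosed
      A hAmono hAne (hAcomp 0) (fun nn => (hAcomp nn).isClosed)
    obtain ⟨wp₀, ⟨hwp₀S, -⟩, hΦwp₀⟩ := Set.mem_iInter.mp hωp 0
    have hwp₀norm : ∀ nn : ℕ, ‖wp₀.1‖ ≤ cI + 1 / ((nn : ℝ) + 1) := by
      intro nn
      obtain ⟨wp', ⟨h1, h2⟩, hΦ'⟩ := Set.mem_iInter.mp hωp nn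
      have heq : wp' = wp₀ := hΦinj (by rw [hΦ', hΦwp₀])
      rwa [heq] at h2
    have hwp₀le : ‖wp₀.1‖ ≤ cI := by
      refine le_of_forall_pos_le_add fun ε hε => ?_
      obtain ⟨nn, hn⟩ := exists_nat_one_div_lt hε
      have := hwp₀norm nn
      linarith
    refine ⟨wp₀, ?_⟩
    rw [hV]
    exact ⟨hwp₀S, fun wp' h' => hwp₀le.trans (hlb wp' h')⟩
  have hwp₀min : ∀ wp' ∈ S, ‖wp₀.1‖ ≤ ‖wp'.1‖ := by
    rw [hV] at hwp₀V; exact hwp₀V.2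
  have hwp₀S : wp₀ ∈ S := by rw [hV] at hwp₀V; exact hwp₀V.1
  -- convexity
  have hconv : Convex ℝ V := by
    rw [hV]
    rintro wp₁ ⟨h₁S, h₁m⟩ wp₂ ⟨h₂S, h₂m⟩ a b ha hb hab
    have hfst : (a • wp₁ + b • wp₂).1 = a • wp₁.1 + b • wp₂.1 := rfl
    have hsnd : (a • wp₁ + b • wp₂).2 = a • wp₁.2 + b • wp₂.2 := rfl
    have hSmem : a • wp₁ + b • wp₂ ∈ S := by
      rw [hS] at h₁S h₂S ⊢
      obtain ⟨hw₁, hp₁, hc₁⟩ := h₁S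
      obtain ⟨hw₂, hp₂, hc₂⟩ := h₂S
      rw [hW] at hw₁ hw₂
      refine ⟨?_, ?_, ?_⟩
      · rw [hW]
        intro φ hφ
        rw [hfst]
        simp only [ContinuousLinearMap.add_apply, ContinuousLinearMap.coe_smul',
          Pi.smul_apply, smul_eq_mul]
        rw [hw₁ φ hφ, hw₂ φ hφ]; ring
      · rw [hsnd]
        exact N.add_mem (N.smul_mem a hp₁) (N.smul_mem b hp₂)
      · intro m
        rw [hfst, hsnd, nip_add_right, nip_smul_right, nip_smul_right]
        simp only [ContinuousLinearMap.add_apply, ContinuousLinearMap.coe_smul',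
          Pi.smul_apply, smul_eq_mul]
        have e1 := hc₁ m
        have e2 := hc₂ m
        have e3 : a * (wp₁.1 (f m) + nip (q m) wp₁.2)
            + b * (wp₂.1 (f m) + nip (q m) wp₂.2) = z₀ m := by
          rw [e1, e2, ← add_mul, hab, one_mul]
        linarith [e3]
    refine ⟨hSmem, fun wp' h' => ?_⟩
    have hn : ‖(a • wp₁ + b • wp₂).1‖ ≤ a * ‖wp₁.1‖ + b * ‖wp₂.1‖ := by
      rw [hfst]
      calc ‖a • wp₁.1 + b • wp₂.1‖ ≤ ‖a • wp₁.1‖ + ‖b • wp₂.1‖ := norm_add_le (a • wp₁.1) (b • wp₂.1)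
      _ = a * ‖wp₁.1‖ + b * ‖wp₂.1‖ := by
          have hNS : NormSMulClass ℝ (StrongDual ℝ C(Torus d, ℝ)) := by
            have := @NormedSpace.toNormSMulClass ℝ (StrongDual ℝ C(Torus d, ℝ)) _ _ _
            exact this
          rw [norm_smul, norm_smul, Real.norm_eq_abs, Real.norm_eq_abs,
            abs_of_nonneg ha, abs_of_nonneg hb]
    calc ‖(a • wp₁ + b • wp₂).1‖ ≤ a * ‖wp₁.1‖ + b * ‖wp₂.1‖ := hn
    _ ≤ a * ‖wp'.1‖ + b * ‖wp'.1‖ := add_le_add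
        (mul_le_mul_of_nonneg_left (h₁m wp' h') ha)
        (mul_le_mul_of_nonneg_left (h₂m wp' h') hb)
    _ = ‖wp'.1‖ := by rw [← add_mul, hab, one_mul]
  -- compactness
  have hVeq : V = {wp | wp ∈ S ∧ ‖wp.1‖ ≤ ‖wp₀.1‖} := by
    rw [hV]
    ext wp
    exact ⟨fun ⟨h1, h2⟩ => ⟨h1, h2 wp₀ hwp₀S⟩,
      fun ⟨h1, h2⟩ => ⟨h1, fun wp' h' => h2.trans (hwp₀min wp' h')⟩⟩
  have hVcomp : IsCompact (Φ '' V) := by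
    rw [hVeq]; exact hcomp _ (norm_nonneg wp₀.1)
  -- extreme points
  have hext : ∀ wp ∈ Set.extremePoints ℝ V, ∃ K : ℕ, K ≤ M ∧
      ∃ (a : Fin K → ℝ) (x : Fin K → Torus d),
        Function.Injective x ∧ wp.1 = ∑ k, a k • dirac (x k) := by
    intro wp hwp
    rw [mem_extremePoints] at hwp
    obtain ⟨hwpV, hwpExt⟩ := hwp
    have hwpS : wp ∈ S := by rw [hV] at hwpV; exact hwpV.1
    have hwpmin : ∀ wp' ∈ S, ‖wp.1‖ ≤ ‖wp'.1‖ := by rw [hV] at hwpV; exact hwpV.2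
    set w : StrongDual ℝ C(Torus d, ℝ) := wp.1 with hwdef
    set p : C(Torus d, ℝ) := wp.2 with hpdef
    rw [hS] at hwpS
    obtain ⟨hwW, hpN, hconstr⟩ := hwpS
    rw [hW] at hwW
    simp only [Set.mem_setOf_eq] at hwW
    rw [← hwdef] at hwW hconstr
    rw [← hpdef] at hpN hconstr
    set D : Set (Torus d) := {y | ∀ r : ℝ, 0 < r → ∃ g : C(Torus d, ℝ),
      (∀ z, r ≤ dist z y → g z = 0) ∧ w g ≠ 0} with hDdef
    -- Step 1: no M+1 distinct points of D
    have hDsmall : ∀ x : Fin (M + 1) → Torus d, (∀ i, x i ∈ D) → ¬ Function.Injective x := by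
      intro x hxD hxinj
      obtain ⟨δ, hδ, hsep⟩ := fj_exists_sep x hxinj
      have h2δ : (0 : ℝ) < 2 * δ := by linarith
      set bb : Fin (M + 1) → C(Torus d, ℝ) := fun i => fjBump (x i) (2 * δ) with hbbdef
      have hgex : ∀ i, ∃ g : C(Torus d, ℝ), (∀ z, δ ≤ dist z (x i) → g z = 0) ∧ w g ≠ 0 :=
        fun i => hxD i δ hδ
      choose gg hggsupp hggne using hgex
      have hbb_gg : ∀ i, bb i * gg i = gg i := by
        intro i; ext z
        rw [ContinuousMap.mul_apply]
        rcases lt_or_ge (dist z (x i)) δ with hz | hz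
        · have h1 : bb i z = 1 := fjBump_eq_one h2δ (by linarith)
          rw [h1, one_mul]
        · rw [hggsupp i z hz, mul_zero]
      have hbb_gg' : ∀ i j, i ≠ j → bb i * gg j = (0 : C(Torus d, ℝ)) := by
        intro i j hij; ext z
        rw [ContinuousMap.mul_apply, ContinuousMap.zero_apply]
        rcases lt_or_ge (dist z (x j)) δ with hz | hz
        · have h5 := hsep i j hij
          have htri := dist_triangle (x i) z (x j)
          rw [dist_comm (x i) z] at htri
          have hzi : 2 * δ ≤ dist z (x i) := by linarith
          have h0 : bb i z = 0 := fjBump_eq_zero h2δ hzi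
          rw [h0, zero_mul]
        · rw [hggsupp j z hz, mul_zero]
      have hbb0 : ∀ i z, 0 ≤ bb i z := fun i z => fjBump_nonneg _ _ _
      have hbbsum : ∀ z, ∑ i, bb i z ≤ 1 := by
        intro z
        by_cases hz : ∃ i, bb i z ≠ 0
        · obtain ⟨i₀, hi₀⟩ := hz
          have hz0 : ∀ j ∈ Finset.univ, j ≠ i₀ → bb j z = 0 := by
            intro j _ hj
            have hdi₀ : dist z (x i₀) < 2 * δ := fjBump_ne_zero_lt h2δ hi₀
            have h5 := hsep j i₀ hj
            have htri := dist_triangle (x j) z (x i₀)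
            rw [dist_comm (x j) z] at htri
            exact fjBump_eq_zero h2δ (by linarith)
          rw [Finset.sum_eq_single i₀ hz0 (fun h => absurd (Finset.mem_univ i₀) h)]
          exact fjBump_le_one _ _ _
        · push_neg at hz
          rw [Finset.sum_eq_zero (fun i _ => hz i)]
          norm_num
      -- linear algebra: find a nontrivial admissible direction
      set μmap : Fin (M + 1) → (↥N →ₗ[ℝ] ℝ) := fun i =>
        ((fjMul w (bb i) : C(Torus d, ℝ) →ₗ[ℝ] ℝ).comp N.subtype) with hμdef
      set vvec : Fin (M + 1) → (Fin M → ℝ) := fun i => fun m => w (bb i * f m) with hvdef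
      set Amap : (Fin (M + 1) → ℝ) →ₗ[ℝ] (↥N →ₗ[ℝ] ℝ) :=
        ∑ i, (LinearMap.proj i).smulRight (μmap i) with hAmapdef
      set Bmap : (Fin (M + 1) → ℝ) →ₗ[ℝ] (Fin M → ℝ) :=
        ∑ i, (LinearMap.proj i).smulRight (vvec i) with hBmapdef
      set Ψ : (Fin (M + 1) → ℝ) →ₗ[ℝ] (↥N →ₗ[ℝ] ℝ) × ((Fin M → ℝ) ⧸ LinearMap.range T) :=
        Amap.prod ((LinearMap.range T).mkQ.comp Bmap) with hΨdef
      have hfrcod : Module.finrank ℝ ((↥N →ₗ[ℝ] ℝ) × ((Fin M → ℝ) ⧸ LinearMap.range T)) ≤ M := by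
        rw [Module.finrank_prod]
        have h1 : Module.finrank ℝ (↥N →ₗ[ℝ] ℝ) = Module.finrank ℝ ↥N := by
          rw [Module.finrank_linearMap, Module.finrank_self, mul_one]
        have h2 := Submodule.finrank_quotient_add_finrank (LinearMap.range T)
        have h3 : Module.finrank ℝ ↥(LinearMap.range T) = Module.finrank ℝ ↥N :=
          LinearMap.finrank_range_of_inj hTinj
        have h4 : Module.finrank ℝ (Fin M → ℝ) = M := by
          rw [Module.finrank_pi]; simp
        omega
      have hΨnotinj : ¬ Function.Injective Ψ := by
        intro hc
        have hle := LinearMap.finrank_le_finrank_of_injective hc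
        have hdom : Module.finrank ℝ (Fin (M + 1) → ℝ) = M + 1 := by
          rw [Module.finrank_pi]; simp
        omega
      obtain ⟨t, htker, ht0⟩ : ∃ t, t ∈ LinearMap.ker Ψ ∧ t ≠ 0 := by
        by_contra hc
        push_neg at hc
        apply hΨnotinj
        rw [← LinearMap.ker_eq_bot, Submodule.eq_bot_iff]
        exact hc
      set s : Fin (M + 1) → ℝ := ‖t‖⁻¹ • t with hsdef
      have ht0' : 0 < ‖t‖ := norm_pos_iff.mpr ht0
      have hsker : Ψ s = 0 := by
        rw [hsdef, _root_.map_smul]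
        rw [LinearMap.mem_ker] at htker
        rw [htker, smul_zero]
      have hsabs : ∀ i, |s i| ≤ 1 := by
        intro i
        rw [hsdef]
        simp only [Pi.smul_apply, smul_eq_mul]
        rw [abs_mul, abs_inv, abs_norm]
        have hti := norm_le_pi_norm t i
        rw [Real.norm_eq_abs] at hti
        calc ‖t‖⁻¹ * |t i| ≤ ‖t‖⁻¹ * ‖t‖ :=
            mul_le_mul_of_nonneg_left hti (inv_nonneg.mpr ht0'.le)
        _ = 1 := inv_mul_cancel₀ ht0'.ne'
      obtain ⟨i₀, hi₀⟩ : ∃ i, s i ≠ 0 := by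
        by_contra hc
        push_neg at hc
        apply ht0
        have hs0 : s = 0 := funext hc
        have ht' : t = ‖t‖ • s := by
          rw [hsdef, smul_smul, mul_inv_cancel₀ ht0'.ne', one_smul]
        rw [ht', hs0, smul_zero]
      set ν : StrongDual ℝ C(Torus d, ℝ) := ∑ i, s i • fjMul w (bb i) with hνdef
      have hν_apply : ∀ g : C(Torus d, ℝ), ν g = ∑ i, s i * w (bb i * g) := by
        intro g
        rw [hνdef]
        simp only [ContinuousLinearMap.coe_sum', Finset.sum_apply,
          ContinuousLinearMap.coe_smul', Pi.smul_apply, fjMul_apply, smul_eq_mul]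
      have hAs : Amap s = 0 := congrArg Prod.fst hsker
      have hBs : Bmap s ∈ LinearMap.range T := by
        have h2 : (LinearMap.range T).mkQ (Bmap s) = 0 := congrArg Prod.snd hsker
        rwa [Submodule.mkQ_apply, Submodule.Quotient.mk_eq_zero] at h2
      have hAmap_apply : ∀ (u : Fin (M + 1) → ℝ) (pt : ↥N),
          Amap u pt = ∑ i, u i * w (bb i * ↑pt) := by
        intro u pt
        rw [hAmapdef]
        simp only [LinearMap.coe_sum, Finset.sum_apply, LinearMap.smulRight_apply,
          LinearMap.proj_apply, LinearMap.sum_apply, LinearMap.smul_apply, smul_eq_mul,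
          hμdef, LinearMap.comp_apply, Submodule.coe_subtype,
          ContinuousLinearMap.coe_coe, fjMul_apply]
      have hBmap_apply : ∀ (u : Fin (M + 1) → ℝ) (m : Fin M),
          Bmap u m = ∑ i, u i * w (bb i * f m) := by
        intro u m
        rw [hBmapdef]
        simp only [LinearMap.coe_sum, Finset.sum_apply, LinearMap.smulRight_apply,
          LinearMap.proj_apply, Pi.smul_apply, smul_eq_mul, hvdef]
      have hν_ann : ∀ φ ∈ N, ν φ = 0 := by
        intro φ hφ
        rw [hν_apply]
        have h1 := hAmap_apply s ⟨φ, hφ⟩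
        rw [hAs] at h1
        simpa using h1.symm
      obtain ⟨ρ₀, hρ₀⟩ := hBs
      have hνf : ∀ m, ν (f m) = T ρ₀ m := by
        intro m
        rw [hν_apply, hρ₀]
        exact (hBmap_apply s m).symm
      set P₁ : StrongDual ℝ C(Torus d, ℝ) × C(Torus d, ℝ) := (w + ν, p - ↑ρ₀) with hP₁def
      set P₂ : StrongDual ℝ C(Torus d, ℝ) × C(Torus d, ℝ) := (w - ν, p + ↑ρ₀) with hP₂def
      have hP₁S : P₁ ∈ S := by
        rw [hS]
        refine ⟨?_, ?_, ?_⟩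
        · rw [hW]
          intro φ hφ
          show (w + ν) φ = 0
          rw [ContinuousLinearMap.add_apply, hwW φ hφ, hν_ann φ hφ, add_zero]
        · show p - ↑ρ₀ ∈ N
          exact N.sub_mem hpN ρ₀.2
        · intro m
          show (w + ν) (f m) + nip (q m) (p - ↑ρ₀) = z₀ m
          rw [ContinuousLinearMap.add_apply, nip_sub_right]
          have h1 := hconstr m
          have h2 : nip (q m) ↑ρ₀ = T ρ₀ m := (hT_apply ρ₀ m).symm
          have h3 := hνf m
          rw [← h2] at h3
          linarith
      have hP₂S : P₂ ∈ S := by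
        rw [hS]
        refine ⟨?_, ?_, ?_⟩
        · rw [hW]
          intro φ hφ
          show (w - ν) φ = 0
          rw [ContinuousLinearMap.sub_apply, hwW φ hφ, hν_ann φ hφ, sub_zero]
        · show p + ↑ρ₀ ∈ N
          exact N.add_mem hpN ρ₀.2
        · intro m
          show (w - ν) (f m) + nip (q m) (p + ↑ρ₀) = z₀ m
          rw [ContinuousLinearMap.sub_apply, nip_add_right]
          have h1 := hconstr m
          have h2 : nip (q m) ↑ρ₀ = T ρ₀ m := (hT_apply ρ₀ m).symm
          have h3 := hνf m
          rw [← h2] at h3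
          linarith
      have hperturb := fj_perturb_norm w bb s hbb0 hbbsum hsabs
      have hmin1 : ‖w‖ ≤ ‖w + ν‖ := hwpmin P₁ hP₁S
      have hmin2 : ‖w‖ ≤ ‖w - ν‖ := hwpmin P₂ hP₂S
      rw [← hνdef] at hperturb
      have heq1 : ‖w + ν‖ = ‖w‖ := le_antisymm (by linarith) hmin1
      have heq2 : ‖w - ν‖ = ‖w‖ := le_antisymm (by linarith) hmin2
      have hP₁V : P₁ ∈ V := by
        rw [hV]
        exact ⟨hP₁S, fun wp' h' => by
          show ‖w + ν‖ ≤ ‖wp'.1‖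
          rw [heq1]; exact hwpmin wp' h'⟩
      have hP₂V : P₂ ∈ V := by
        rw [hV]
        exact ⟨hP₂S, fun wp' h' => by
          show ‖w - ν‖ ≤ ‖wp'.1‖
          rw [heq2]; exact hwpmin wp' h'⟩
      have hseg : wp ∈ openSegment ℝ P₁ P₂ := by
        refine ⟨1/2, 1/2, by norm_num, by norm_num, by norm_num, ?_⟩
        have hfsteq : (1/2 : ℝ) • (w + ν) + (1/2 : ℝ) • (w - ν) = w := by module
        have hsndeq : (1/2 : ℝ) • (p - (↑ρ₀ : C(Torus d, ℝ)))
            + (1/2 : ℝ) • (p + (↑ρ₀ : C(Torus d, ℝ))) = p := by module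
        rw [hP₁def, hP₂def, Prod.smul_mk, Prod.smul_mk, Prod.mk_add_mk, hfsteq, hsndeq]
      have hcontr := hwpExt P₁ hP₁V P₂ hP₂V hseg
      have hν0 : ν = 0 := by
        have h1 : w + ν = w := congrArg Prod.fst hcontr.1
        exact add_eq_left.mp h1
      have hcalc : ν (gg i₀) = s i₀ * w (gg i₀) := by
        rw [hν_apply]
        rw [Finset.sum_eq_single i₀ ?_ (fun h => absurd (Finset.mem_univ i₀) h)]
        · rw [hbb_gg i₀]
        · intro j _ hj
          rw [hbb_gg' j i₀ hj, map_zero, mul_zero]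
      rw [hν0] at hcalc
      simp only [ContinuousLinearMap.zero_apply] at hcalc
      rcases mul_eq_zero.mp hcalc.symm with h | h
      · exact hi₀ h
      · exact hggne i₀ h
    -- Step 2: enumerate D
    have hfinsetD : ∀ t : Finset (Torus d), ↑t ⊆ D → t.card ≤ M := by
      intro t ht
      by_contra hc
      push_neg at hc
      obtain ⟨t', ht't, ht'card⟩ := Finset.exists_subset_card_eq (show M + 1 ≤ t.card from hc)
      set e := Finset.equivFinOfCardEq ht'card with hedef
      set x : Fin (M + 1) → Torus d := fun i => ↑(e.symm i) with hxdef
      have hxinj : Function.Injective x := fun i j hij => by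
        have := Subtype.ext hij
        exact e.symm.injective this
      exact hDsmall x (fun i => ht (ht't (e.symm i).2)) hxinj
    have hDfin : D.Finite := by
      by_contra hinf
      obtain ⟨t, hts, htc⟩ := Set.Infinite.exists_subset_card_eq hinf (M + 1)
      have := hfinsetD t hts
      omega
    set K := hDfin.toFinset.card with hKdef
    have hKM : K ≤ M := hfinsetD hDfin.toFinset (by simp [Set.Finite.coe_toFinset])
    set eD := hDfin.toFinset.equivFin with heDdef
    set x : Fin K → Torus d := fun k => ↑(eD.symm k) with hxdef
    have hxinj : Function.Injective x := fun i j hij =>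
      eD.symm.injective (Subtype.ext hij)
    have hDrange : ∀ y ∈ D, ∃ k, x k = y := by
      intro y hy
      refine ⟨eD ⟨y, hDfin.mem_toFinset.mpr hy⟩, ?_⟩
      rw [hxdef]
      simp [Equiv.symm_apply_apply]
    have hnull : ∀ y : Torus d, (∀ k, y ≠ x k) → ∃ r, 0 < r ∧ ∀ g : C(Torus d, ℝ),
        (∀ z, r ≤ dist z y → g z = 0) → w g = 0 := by
      intro y hy
      have hyD : y ∉ D := by
        intro hyD
        obtain ⟨k, hk⟩ := hDrange y hyD
        exact hy k hk.symm
      rw [hDdef] at hyD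
      simp only [Set.mem_setOf_eq] at hyD
      push_neg at hyD
      obtain ⟨r, hr, hr2⟩ := hyD
      exact ⟨r, hr, hr2⟩
    -- Step 3: assemble the Dirac representation
    obtain ⟨δ₂, hδ₂, hsep₂⟩ := fj_exists_sep x hxinj
    have h2δ₂ : (0 : ℝ) < 2 * δ₂ := by linarith
    set φb : Fin K → C(Torus d, ℝ) := fun k => fjBump (x k) (2 * δ₂) with hφbdef
    have hφb_eq : ∀ k, φb k (x k) = 1 := fun k =>
      fjBump_eq_one h2δ₂ (by rw [dist_self]; linarith)
    have hφb_ne : ∀ k j, j ≠ k → φb k (x j) = 0 := by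
      intro k j hjk
      refine fjBump_eq_zero h2δ₂ ?_
      have := hsep₂ j k hjk
      linarith
    set a : Fin K → ℝ := fun k => w (φb k) with hadef
    refine ⟨K, hKM, a, x, hxinj, ?_⟩
    ext g
    have hvan : w (g - ∑ k, g (x k) • φb k) = 0 := by
      refine fj_dual_vanish w x hnull _ (fun j => ?_)
      rw [ContinuousMap.sub_apply]
      have hsum : (∑ k, g (x k) • φb k) (x j) = g (x j) := by
        rw [ContinuousMap.sum_apply]
        rw [Finset.sum_eq_single j ?_ (fun h => absurd (Finset.mem_univ j) h)]
        · rw [ContinuousMap.smul_apply, hφb_eq j, smul_eq_mul, mul_one]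
        · intro k _ hkj
          rw [ContinuousMap.smul_apply, hφb_ne k j hkj.symm, smul_zero]
      rw [hsum, sub_self]
    have hexp : w (∑ k, g (x k) • φb k) = ∑ k, g (x k) * w (φb k) := by
      rw [map_sum]
      exact Finset.sum_congr rfl fun k _ => by rw [_root_.map_smul, smul_eq_mul]
    rw [map_sub, hexp, sub_eq_zero] at hvan
    show w g = (∑ k, a k • dirac (x k)) g
    rw [ContinuousLinearMap.sum_apply]
    simp only [ContinuousLinearMap.coe_smul', Pi.smul_apply, smul_eq_mul]
    rw [hvan]
    exact Finset.sum_congr rfl fun k _ => mul_comm _ _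
  exact ⟨⟨wp₀, hwp₀V⟩, hconv, hVcomp, hext⟩
end

section
/- Let γ ∈ ℝ with 1/2 < γ ≤ 1. Then there is no continuous function h on the circle ℝ/2πℤ whose Fourier coefficients with respect to the normalized Haar probability measure satisfy ĥ(k) = |k|^{-γ} for all k ≠ 0 and ĥ(0) = 0. (This is the assertion, proved within Proposition 6.3, that the Green's function of the fractional Laplacian (−Δ)^{γ/2} is discontinuous for 1/2 < γ ≤ 1, so that (−Δ)^{γ/2} is not sampling-admissible for such γ.) -/
open scoped Real
open MeasureTheory Finset AddCircle

section Aux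
variable {T : ℝ} [hT : Fact (0 < T)]

lemma integrable_cont' {E : Type*} [NormedAddCommGroup E] {f : AddCircle T → E}
    (hf : Continuous f) : Integrable f (@haarAddCircle T _) :=
  hf.integrable_of_hasCompactSupport (HasCompactSupport.of_compactSpace _)

lemma integral_fourier' (m : ℤ) :
    ∫ x : AddCircle T, fourier m x ∂haarAddCircle = if m = 0 then 1 else 0 := by
  split_ifs with hm
  · subst hm
    simp [fourier_zero]
  · exact integral_eq_zero_of_add_right_eq_neg (μ := haarAddCircle)
      (fourier_add_half_inv_index hm hT.out)

end Aux

/-- For `1/2 < γ ≤ 1`, there is no continuous function on the circle `ℝ/2πℤ` whose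
Fourier coefficients (w.r.t. the normalized Haar probability measure) are `|k|^{-γ}` for
`k ≠ 0` and `0` for `k = 0`.  Hence the Green's function of the fractional Laplacian
`(−Δ)^{γ/2}` is discontinuous for such `γ`. -/
theorem no_continuous_function_with_fourierCoeff_abs_rpow (γ : ℝ)
    (hγ₁ : 1 / 2 < γ) (hγ₂ : γ ≤ 1) :
    ¬ ∃ h : C(AddCircle (2 * π), ℂ),
        (∀ k : ℤ, k ≠ 0 → fourierCoeff (⇑h) k = ((|(k : ℝ)| ^ (-γ) : ℝ) : ℂ)) ∧
        fourierCoeff (⇑h) 0 = 0 := by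
  rintro ⟨h, hk, h0⟩
  -- the real coefficients
  set c : ℤ → ℝ := fun m => if m = 0 then 0 else |(m : ℝ)| ^ (-γ) with hc
  have hc0 : ∀ m, 0 ≤ c m := by
    intro m
    by_cases hm : m = 0 <;> simp [hc, hm]
    positivity
  have hcoeff : ∀ m : ℤ, fourierCoeff (⇑h) m = ((c m : ℝ) : ℂ) := by
    intro m
    by_cases hm : m = 0
    · rw [hm, h0]; simp [hc]
    · rw [hk m hm]; simp [hc, hm]
  -- the Dirichlet-type kernel
  set D : ℕ → AddCircle (2 * π) → ℂ := fun n x => ∑ j ∈ range n, fourier (j : ℤ) x with hD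
  have hDcont : ∀ n, Continuous (D n) := fun n =>
    continuous_finset_sum _ fun j _ => (fourier (j : ℤ)).continuous
  have hDD : ∀ (n : ℕ) (x : AddCircle (2 * π)),
      D n x * (starRingEnd ℂ) (D n x)
        = ∑ j ∈ range n, ∑ k ∈ range n, fourier ((j : ℤ) - k) x := by
    intro n x
    rw [hD, map_sum, Finset.sum_mul_sum]
    refine Finset.sum_congr rfl fun j _ => Finset.sum_congr rfl fun k _ => ?_
    rw [← fourier_neg, ← fourier_add, sub_eq_add_neg]
  -- expansion of the double product against any continuous g
  have key : ∀ (g : C(AddCircle (2 * π), ℂ)) (n : ℕ),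
      ∫ x, g x * (D n x * (starRingEnd ℂ) (D n x)) ∂haarAddCircle
        = ∑ j ∈ range n, ∑ k ∈ range n, fourierCoeff (⇑g) ((k : ℤ) - j) := by
    intro g n
    calc ∫ x, g x * (D n x * (starRingEnd ℂ) (D n x)) ∂haarAddCircle
        = ∫ x, ∑ j ∈ range n, ∑ k ∈ range n, fourier ((j : ℤ) - k) x * g x ∂haarAddCircle := by
          refine integral_congr_ae (Filter.Eventually.of_forall fun x => ?_)
          show g x * (D n x * (starRingEnd ℂ) (D n x)) = _
          rw [hDD, Finset.mul_sum]
          refine Finset.sum_congr rfl fun j _ => ?_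
          rw [Finset.mul_sum]
          exact Finset.sum_congr rfl fun k _ => mul_comm _ _
      _ = ∑ j ∈ range n, ∫ x, ∑ k ∈ range n, fourier ((j : ℤ) - k) x * g x ∂haarAddCircle := by
          refine integral_finset_sum _ fun j _ => ?_
          exact integrable_finset_sum _ fun k _ => integrable_cont'
            ((fourier ((j : ℤ) - k)).continuous.mul g.continuous)
      _ = ∑ j ∈ range n, ∑ k ∈ range n, ∫ x, fourier ((j : ℤ) - k) x * g x ∂haarAddCircle := by
          refine Finset.sum_congr rfl fun j _ => ?_
          exact integral_finset_sum _ fun k _ => integrable_cont'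
            ((fourier ((j : ℤ) - k)).continuous.mul g.continuous)
      _ = ∑ j ∈ range n, ∑ k ∈ range n, fourierCoeff (⇑g) ((k : ℤ) - j) := by
          refine Finset.sum_congr rfl fun j _ => Finset.sum_congr rfl fun k _ => ?_
          simp only [fourierCoeff, neg_sub, smul_eq_mul]
  -- total mass of |D n|^2
  have mass : ∀ n : ℕ, ∫ x, ‖D n x‖ ^ 2 ∂(haarAddCircle (T := 2 * π)) = n := by
    intro n
    have h1 := key 1 n
    have hco : ∀ m : ℤ, fourierCoeff ((1 : C(AddCircle (2 * π), ℂ)) : AddCircle (2 * π) → ℂ) m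
        = if m = 0 then 1 else 0 := by
      intro m
      rw [fourierCoeff]
      simp only [ContinuousMap.coe_one, Pi.one_apply, smul_eq_mul, mul_one]
      rw [integral_fourier' (-m)]
      simp
    have h2 : ∑ j ∈ range n, ∑ k ∈ range n,
        fourierCoeff ((1 : C(AddCircle (2 * π), ℂ)) : AddCircle (2 * π) → ℂ) ((k : ℤ) - j)
          = (n : ℂ) := by
      simp_rw [hco, sub_eq_zero, Int.natCast_inj]
      rw [Finset.sum_congr rfl fun j hj => Finset.sum_ite_eq' (range n) j fun _ => (1 : ℂ)]
      rw [Finset.sum_congr rfl fun j hj => if_pos hj]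
      simp
    have h3 : ∀ x, (1 : C(AddCircle (2 * π), ℂ)) x * (D n x * (starRingEnd ℂ) (D n x))
        = ((‖D n x‖ ^ 2 : ℝ) : ℂ) := by
      intro x
      rw [ContinuousMap.one_apply, one_mul, Complex.mul_conj]
      norm_cast
      rw [Complex.normSq_eq_norm_sq]
    rw [h2] at h1
    simp_rw [h3] at h1
    have h4 : ∫ x, ((‖D n x‖ ^ 2 : ℝ) : ℂ) ∂(haarAddCircle (T := 2 * π))
        = ((∫ x, ‖D n x‖ ^ 2 ∂(haarAddCircle (T := 2 * π)) : ℝ) : ℂ) :=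
      integral_ofReal (𝕜 := ℂ)
    rw [h4] at h1
    exact_mod_cast h1
  -- the double sum of coefficients is bounded by ‖h‖ * n
  have bound : ∀ n : ℕ, ∑ j ∈ range n, ∑ k ∈ range n, c ((k : ℤ) - j) ≤ ‖h‖ * n := by
    intro n
    have e1 := key h n
    have e2 : ∑ j ∈ range n, ∑ k ∈ range n, fourierCoeff (⇑h) ((k : ℤ) - j)
        = ((∑ j ∈ range n, ∑ k ∈ range n, c ((k : ℤ) - j) : ℝ) : ℂ) := by
      simp_rw [hcoeff]; push_cast; rfl
    have hS0 : 0 ≤ ∑ j ∈ range n, ∑ k ∈ range n, c ((k : ℤ) - j) :=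
      Finset.sum_nonneg fun j _ => Finset.sum_nonneg fun k _ => hc0 _
    calc ∑ j ∈ range n, ∑ k ∈ range n, c ((k : ℤ) - j)
        = ‖∫ x, h x * (D n x * (starRingEnd ℂ) (D n x)) ∂haarAddCircle‖ := by
          rw [e1, e2, Complex.norm_real, Real.norm_of_nonneg hS0]
      _ ≤ ∫ x, ‖h x * (D n x * (starRingEnd ℂ) (D n x))‖ ∂haarAddCircle :=
          norm_integral_le_integral_norm _
      _ = ∫ x, ‖h x‖ * ‖D n x‖ ^ 2 ∂haarAddCircle := by
          refine integral_congr_ae (Filter.Eventually.of_forall fun x => ?_)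
          show ‖h x * (D n x * (starRingEnd ℂ) (D n x))‖ = ‖h x‖ * ‖D n x‖ ^ 2
          rw [norm_mul, Complex.mul_conj, Complex.norm_real,
            Real.norm_of_nonneg (Complex.normSq_nonneg _), Complex.normSq_eq_norm_sq]
      _ ≤ ∫ x, ‖h‖ * ‖D n x‖ ^ 2 ∂haarAddCircle := by
          refine integral_mono ?_ ?_ fun x => ?_
          · exact integrable_cont' ((h.continuous.norm).mul ((hDcont n).norm.pow 2))
          · exact integrable_cont' (continuous_const.mul ((hDcont n).norm.pow 2))
          · exact mul_le_mul_of_nonneg_right (h.norm_coe_le_norm x) (by positivity)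
      _ = ‖h‖ * ∫ x, ‖D n x‖ ^ 2 ∂haarAddCircle := integral_const_mul _ _
      _ = ‖h‖ * n := by rw [mass]
  -- lower bound via harmonic sums
  set H : ℕ → ℝ := fun M => ∑ i ∈ range M, 1 / (i + 1 : ℝ) with hH
  have lower : ∀ M : ℕ, (M + 1 : ℝ) * H M ≤
      ∑ j ∈ range (2 * M + 1), ∑ k ∈ range (2 * M + 1), c ((k : ℤ) - j) := by
    intro M
    have step1 : ∀ j ∈ range (M + 1),
        H M ≤ ∑ k ∈ range (2 * M + 1), c ((k : ℤ) - j) := by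
      intro j hj
      rw [Finset.mem_range, Nat.lt_succ_iff] at hj
      have hsub : Finset.Ico (j + 1) (j + 1 + M) ⊆ range (2 * M + 1) := by
        intro k hk
        rw [Finset.mem_Ico] at hk
        rw [Finset.mem_range]
        omega
      have hHle : H M ≤ ∑ k ∈ Finset.Ico (j + 1) (j + 1 + M), c ((k : ℤ) - j) := by
        rw [Finset.sum_Ico_eq_sum_range]
        have hMe : (j + 1 + M) - (j + 1) = M := by omega
        rw [hMe, hH]
        refine Finset.sum_le_sum fun i _ => ?_
        have hne : ((j + 1 + i : ℕ) : ℤ) - (j : ℕ) ≠ 0 := by push_cast; omega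
        have habs : |((((j + 1 + i : ℕ) : ℤ) - (j : ℕ) : ℤ) : ℝ)| = (i + 1 : ℝ) := by
          push_cast
          rw [abs_of_nonneg] <;> [ring; linarith [Nat.cast_nonneg (α := ℝ) i]]
        simp only [hc, hne, if_false]
        rw [habs]
        have h1le : (1 : ℝ) ≤ (i + 1 : ℝ) := by linarith [Nat.cast_nonneg (α := ℝ) i]
        calc (1 : ℝ) / (i + 1 : ℝ) = (i + 1 : ℝ) ^ (-1 : ℝ) := by
              rw [Real.rpow_neg_one, one_div]
          _ ≤ (i + 1 : ℝ) ^ (-γ) := Real.rpow_le_rpow_of_exponent_le h1le (by linarith)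
      exact hHle.trans (Finset.sum_le_sum_of_subset_of_nonneg hsub fun k _ _ => hc0 _)
    calc (M + 1 : ℝ) * H M = ∑ _j ∈ range (M + 1), H M := by
          rw [Finset.sum_const, Finset.card_range, nsmul_eq_mul]; push_cast; ring
      _ ≤ ∑ j ∈ range (M + 1), ∑ k ∈ range (2 * M + 1), c ((k : ℤ) - j) :=
          Finset.sum_le_sum step1
      _ ≤ ∑ j ∈ range (2 * M + 1), ∑ k ∈ range (2 * M + 1), c ((k : ℤ) - j) := by
          refine Finset.sum_le_sum_of_subset_of_nonneg ?_ fun j _ _ =>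
            Finset.sum_nonneg fun k _ => hc0 _
          intro j hj
          rw [Finset.mem_range] at hj ⊢
          omega
  -- conclude
  have final : ∀ M : ℕ, H M ≤ 2 * ‖h‖ := by
    intro M
    have h1 := (lower M).trans (bound (2 * M + 1))
    have hnorm0 : (0 : ℝ) ≤ ‖h‖ := norm_nonneg _
    have h2 : ‖h‖ * ((2 * M + 1 : ℕ) : ℝ) ≤ 2 * ‖h‖ * (M + 1 : ℝ) := by
      push_cast; nlinarith
    have h3 : (M + 1 : ℝ) * H M ≤ 2 * ‖h‖ * (M + 1 : ℝ) := h1.trans h2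
    have hM : (0 : ℝ) < (M : ℝ) + 1 := by positivity
    nlinarith
  obtain ⟨M, hM⟩ := (Real.tendsto_sum_range_one_div_nat_succ_atTop.eventually_gt_atTop
    (2 * ‖h‖)).exists
  exact absurd (final M) (not_le.mpr (by simpa [hH] using hM))
end
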